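/- The function d(T,S) = tanh^{-1} ‖Ṡ-to-Ṫ Möbius image‖ on C(H,K), equivalently d(T,S) = K_B(Ṫ, Ṡ) where K_B is the Kobayashi distance on the open unit ball B of L(K,H) and Ṫ = (I+T*T)^{-1/2}T*, defines a metric on C(H,K). -/

import Mathlib

/-- `artanh x = ½ log((1+x)/(1-x))`, the inverse hyperbolic tangent. -/
noncomputable def artanh (x : ℝ) : ℝ := (1 / 2) * Real.log ((1 + x) / (1 - x))

/-- The Poincaré distance `ω(a,b) = tanh⁻¹ (|a-b| / |1 - āb|)` on the open unit disc. -/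
noncomputable def poincareDist (a b : ℂ) : ℝ :=
  artanh (‖a - b‖ / ‖1 - (starRingEnd ℂ) a * b‖)

section DiscAux
open Metric Set Complex


lemma artanh_zero : artanh 0 = 0 := by simp [artanh]

lemma artanh_nonneg {t : ℝ} (h0 : 0 ≤ t) (h1 : t < 1) : 0 ≤ artanh t := by
  have : (1 : ℝ) ≤ (1 + t) / (1 - t) := by
    rw [le_div_iff₀ (by linarith)]; linarith
  have := Real.log_nonneg this
  unfold artanh; linarith

lemma le_two_mul_artanh {t : ℝ} (h0 : 0 ≤ t) (h1 : t < 1) : t ≤ 2 * artanh t := by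
  have h2 : (0:ℝ) < 1 - t := by linarith
  have h3 : (0:ℝ) < 1 + t := by linarith
  have hlog : Real.log ((1 + t) / (1 - t)) = Real.log (1 + t) - Real.log (1 - t) :=
    Real.log_div (by linarith) (by linarith)
  have l1 : 0 ≤ Real.log (1 + t) := Real.log_nonneg (by linarith)
  have l2 : Real.log (1 - t) ≤ (1 - t) - 1 := Real.log_le_sub_one_of_pos h2
  unfold artanh; rw [hlog]; linarith

/-- The key Möbius identity `|1 - z̄w|² - |z-w|² = (1-|z|²)(1-|w|²)`. -/
lemma mobius_identity (z w : ℂ) :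
    (‖1 - (starRingEnd ℂ) z * w‖)^2 - (‖z - w‖)^2
      = (1 - (‖z‖)^2) * (1 - (‖w‖)^2) := by
  have h2 : ∀ u : ℂ, ((‖u‖)^2 : ℂ) = u * (starRingEnd ℂ) u := fun u => by
    rw [Complex.mul_conj]; norm_cast; exact (Complex.sq_norm u)
  have : ((‖1 - (starRingEnd ℂ) z * w‖)^2 : ℂ) - (‖z - w‖)^2
      = (1 - (‖z‖)^2) * (1 - (‖w‖)^2) := by
    rw [h2, h2, h2, h2]
    simp only [map_sub, map_mul, map_one, Complex.conj_conj]
    ring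
  exact_mod_cast this

/-- The Möbius transformation of the disc. -/
noncomputable def mob (a ζ : ℂ) : ℂ := (a - ζ) / (1 - (starRingEnd ℂ) a * ζ)

lemma mob_den_ne {a ζ : ℂ} (ha : ‖a‖ < 1) (hζ : ‖ζ‖ < 1) :
    1 - (starRingEnd ℂ) a * ζ ≠ 0 := by
  intro h
  have h1 : (starRingEnd ℂ) a * ζ = 1 := by linear_combination -h
  have : ‖(starRingEnd ℂ) a * ζ‖ = 1 := by rw [h1, norm_one]
  rw [norm_mul, Complex.norm_conj] at this
  nlinarith [norm_nonneg a, norm_nonneg ζ]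

lemma abs_mob_eq (a ζ : ℂ) :
    ‖mob a ζ‖ = ‖a - ζ‖ / ‖1 - (starRingEnd ℂ) a * ζ‖ := by
  rw [mob, norm_div]

lemma poincareDist_eq (a b : ℂ) : poincareDist a b = artanh (‖mob a b‖) := by
  rw [poincareDist, abs_mob_eq]

lemma abs_mob_lt_one {a ζ : ℂ} (ha : ‖a‖ < 1) (hζ : ‖ζ‖ < 1) :
    ‖mob a ζ‖ < 1 := by
  have hd := mob_den_ne ha hζ
  have hdpos : 0 < ‖1 - (starRingEnd ℂ) a * ζ‖ := by
    simpa [norm_pos_iff] using hd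
  rw [abs_mob_eq, div_lt_one hdpos]
  have hid := mobius_identity a ζ
  have ha2 : (‖a‖)^2 < 1 := by nlinarith [norm_nonneg a]
  have hζ2 : (‖ζ‖)^2 < 1 := by nlinarith [norm_nonneg ζ]
  have h1 : (‖a - ζ‖)^2 < (‖1 - (starRingEnd ℂ) a * ζ‖)^2 := by
    nlinarith [mul_pos (by linarith : (0:ℝ) < 1 - (‖a‖)^2)
      (by linarith : (0:ℝ) < 1 - (‖ζ‖)^2)]
  exact lt_of_pow_lt_pow_left₀ 2 (norm_nonneg _) h1

lemma poincareDist_nonneg {a b : ℂ} (ha : ‖a‖ < 1) (hb : ‖b‖ < 1) :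
    0 ≤ poincareDist a b := by
  rw [poincareDist_eq]
  exact artanh_nonneg (norm_nonneg _) (abs_mob_lt_one ha hb)

lemma poincareDist_comm (a b : ℂ) : poincareDist a b = poincareDist b a := by
  unfold poincareDist
  congr 2
  · rw [show a - b = -(b - a) by ring]; exact norm_neg (b - a)
  · rw [← Complex.norm_conj (1 - (starRingEnd ℂ) a * b)]
    congr 1
    simp only [map_sub, map_mul, map_one, Complex.conj_conj]
    ring

lemma mob_zero (a : ℂ) : mob a 0 = a := by simp [mob]

lemma mob_self (a : ℂ) : mob a a = 0 := by simp [mob]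

lemma mob_invol {a ζ : ℂ} (ha : ‖a‖ < 1) (hζ : ‖ζ‖ < 1) :
    mob a (mob a ζ) = ζ := by
  have h1 := mob_den_ne ha hζ
  have h2 : 1 - (starRingEnd ℂ) a * mob a ζ ≠ 0 := mob_den_ne ha (abs_mob_lt_one ha hζ)
  have h3 : 1 - a * (starRingEnd ℂ) a ≠ 0 := by
    intro h
    have : a * (starRingEnd ℂ) a = 1 := by linear_combination -h
    have : ‖a * (starRingEnd ℂ) a‖ = 1 := by rw [this, norm_one]
    rw [norm_mul, Complex.norm_conj] at this
    nlinarith [norm_nonneg a]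
  rw [mob, mob] at *
  field_simp at h2 ⊢
  · ring_nf
    ring_nf at h2
    field_simp
    ring

lemma mem_ball_iff_abs {z : ℂ} : z ∈ ball (0:ℂ) 1 ↔ ‖z‖ < 1 := by
  rw [mem_ball_zero_iff]

lemma mob_differentiableOn {a : ℂ} (ha : ‖a‖ < 1) :
    DifferentiableOn ℂ (mob a) (ball 0 1) := by
  intro ζ hζ
  apply DifferentiableAt.differentiableWithinAt
  apply DifferentiableAt.div
  · exact (differentiable_const a).sub differentiable_id |>.differentiableAt
  · exact ((differentiable_const (1:ℂ)).sub
      ((differentiable_const ((starRingEnd ℂ) a)).mul differentiable_id)).differentiableAt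
  · exact mob_den_ne ha (mem_ball_iff_abs.1 hζ)

lemma mob_mapsTo {a : ℂ} (ha : ‖a‖ < 1) :
    MapsTo (mob a) (ball 0 1) (ball 0 1) := fun ζ hζ =>
  mem_ball_iff_abs.2 (abs_mob_lt_one ha (mem_ball_iff_abs.1 hζ))

/-- **Schwarz–Pick lemma** for the unit disc. -/
lemma schwarz_pick {g : ℂ → ℂ} (hd : DifferentiableOn ℂ g (ball 0 1))
    (hm : MapsTo g (ball 0 1) (ball 0 1)) {z w : ℂ}
    (hz : z ∈ ball (0:ℂ) 1) (hw : w ∈ ball (0:ℂ) 1) :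
    ‖mob (g z) (g w)‖ ≤ ‖mob z w‖ := by
  have haz : ‖z‖ < 1 := mem_ball_iff_abs.1 hz
  have haw : ‖w‖ < 1 := mem_ball_iff_abs.1 hw
  have hgz : ‖g z‖ < 1 := mem_ball_iff_abs.1 (hm hz)
  set h : ℂ → ℂ := fun ζ => mob (g z) (g (mob z ζ)) with hh
  have hdh : DifferentiableOn ℂ h (ball 0 1) :=
    ((mob_differentiableOn hgz).comp (hd.comp (mob_differentiableOn haz) (mob_mapsTo haz))
      ((hd.comp (mob_differentiableOn haz) (mob_mapsTo haz)) |> fun _ => (hm.comp (mob_mapsTo haz))))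
  have hmh : MapsTo h (ball 0 1) (ball 0 1) :=
    (mob_mapsTo hgz).comp (hm.comp (mob_mapsTo haz))
  have h0 : h 0 = 0 := by rw [hh]; simp only; rw [mob_zero, mob_self]
  have hp : ‖mob z w‖ < 1 := abs_mob_lt_one haz haw
  have := Complex.norm_le_norm_of_mapsTo_ball hdh (hmh.mono_right ball_subset_closedBall) h0 hp
  have heq : h (mob z w) = mob (g z) (g w) := by
    rw [hh]; simp only; rw [mob_invol haz haw]
  rwa [heq] at this

end DiscAux

variable {X : Type*} [NormedAddCommGroup X] [NormedSpace ℂ X]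

/-- An analytic chain joining `x` and `y` in the open unit ball of a complex Banach
space `X`: holomorphic maps `f 0, …, f n` from the unit disc into the ball, together with
points `z i, w i` of the disc, such that `f 0 (z 0) = x`, `f n (w n) = y` and
`f i (w i) = f (i+1) (z (i+1))`. -/
structure AnalyticChain (x y : X) where
  n : ℕ
  f : Fin (n + 1) → ℂ → X
  z : Fin (n + 1) → ℂ
  w : Fin (n + 1) → ℂ
  holo : ∀ i, DifferentiableOn ℂ (f i) (Metric.ball 0 1)
  maps : ∀ i, ∀ c ∈ Metric.ball (0 : ℂ) 1, f i c ∈ Metric.ball (0 : X) 1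
  z_mem : ∀ i, z i ∈ Metric.ball (0 : ℂ) 1
  w_mem : ∀ i, w i ∈ Metric.ball (0 : ℂ) 1
  first : f 0 (z 0) = x
  last : f (Fin.last n) (w (Fin.last n)) = y
  link : ∀ i : Fin n, f i.castSucc (w i.castSucc) = f i.succ (z i.succ)

/-- The length `∑ ω(zᵢ, wᵢ)` of an analytic chain. -/
noncomputable def AnalyticChain.length {x y : X} (c : AnalyticChain x y) : ℝ :=
  ∑ i, poincareDist (c.z i) (c.w i)

/-- The Kobayashi (pseudo-)distance on the open unit ball of `X`: the infimum of lengths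
of analytic chains joining `x` and `y`. -/
noncomputable def kobayashiDist (x y : X) : ℝ :=
  sInf (Set.range fun c : AnalyticChain x y => c.length)

section ChainAux

open Metric Set Complex

variable {X : Type*} [NormedAddCommGroup X] [NormedSpace ℂ X]

lemma chain_pd_nonneg {x y : X} (c : AnalyticChain x y) (i : Fin (c.n + 1)) :
    0 ≤ poincareDist (c.z i) (c.w i) :=
  poincareDist_nonneg (mem_ball_iff_abs.1 (c.z_mem i)) (mem_ball_iff_abs.1 (c.w_mem i))

lemma length_nonneg {x y : X} (c : AnalyticChain x y) : 0 ≤ c.length :=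
  Finset.sum_nonneg fun i _ => chain_pd_nonneg c i

lemma kobayashiDist_nonneg (x y : X) : 0 ≤ kobayashiDist x y :=
  Real.sInf_nonneg (by rintro l ⟨c, rfl⟩; exact length_nonneg c)

lemma lengths_bddBelow (x y : X) :
    BddBelow (Set.range fun c : AnalyticChain x y => c.length) :=
  ⟨0, by rintro l ⟨c, rfl⟩; exact length_nonneg c⟩

/-- The constant chain at a point of the ball. -/
noncomputable def constChain (x : X) (hx : ‖x‖ < 1) : AnalyticChain x x where
  n := 0
  f _ := fun _ => x
  z _ := 0
  w _ := 0
  holo _ := differentiableOn_const x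
  maps _ := fun _ _ => mem_ball_zero_iff.2 hx
  z_mem _ := mem_ball_self one_pos
  w_mem _ := mem_ball_self one_pos
  first := rfl
  last := rfl
  link i := i.elim0

lemma constChain_length (x : X) (hx : ‖x‖ < 1) : (constChain x hx).length = 0 := by
  simp [AnalyticChain.length, constChain, poincareDist, artanh]

/-- A two-piece chain joining any two points of the ball, through `0`. -/
noncomputable def joinChain (x y : X) (hx : ‖x‖ < 1) (hy : ‖y‖ < 1) : AnalyticChain x y where
  n := 1
  f := ![fun c => (c / (((1 + ‖x‖) / 2 : ℝ) : ℂ)) • x, fun c => (c / (((1 + ‖y‖) / 2 : ℝ) : ℂ)) • y]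
  z := ![(((1 + ‖x‖) / 2 : ℝ) : ℂ), 0]
  w := ![0, (((1 + ‖y‖) / 2 : ℝ) : ℂ)]
  holo := by
    intro i
    fin_cases i <;>
      exact ((differentiable_id.div_const _).smul_const _).differentiableOn
  maps := by
    have key : ∀ (v : X), ‖v‖ < 1 → ∀ c ∈ ball (0:ℂ) 1,
        (c / (((1 + ‖v‖) / 2 : ℝ) : ℂ)) • v ∈ ball (0 : X) 1 := by
      intro v hv c hc
      have hr : (0:ℝ) < (1 + ‖v‖) / 2 := by positivity
      have hvr : ‖v‖ ≤ (1 + ‖v‖) / 2 := by linarith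
      have hc' : ‖c‖ < 1 := mem_ball_zero_iff.1 hc
      rw [mem_ball_zero_iff, norm_smul, norm_div]
      have habs : ‖(((1 + ‖v‖) / 2 : ℝ) : ℂ)‖ = (1 + ‖v‖) / 2 := by
        rw [Complex.norm_real, Real.norm_of_nonneg hr.le]
      rw [habs]
      calc ‖c‖ / ((1 + ‖v‖) / 2) * ‖v‖ ≤ ‖c‖ / ((1 + ‖v‖) / 2) * ((1 + ‖v‖) / 2) := by
            apply mul_le_mul_of_nonneg_left hvr (by positivity)
        _ = ‖c‖ := by field_simp
        _ < 1 := hc'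
    intro i
    fin_cases i
    · exact key x hx
    · exact key y hy
  z_mem := by
    intro i
    fin_cases i
    · show (((1 + ‖x‖) / 2 : ℝ) : ℂ) ∈ ball (0:ℂ) 1
      rw [mem_ball_zero_iff, Complex.norm_real, Real.norm_of_nonneg (by positivity)]
      have := norm_nonneg x; linarith
    · exact mem_ball_self one_pos
  w_mem := by
    intro i
    fin_cases i
    · exact mem_ball_self one_pos
    · show (((1 + ‖y‖) / 2 : ℝ) : ℂ) ∈ ball (0:ℂ) 1
      rw [mem_ball_zero_iff, Complex.norm_real, Real.norm_of_nonneg (by positivity)]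
      have := norm_nonneg y; linarith
  first := by
    show ((((1 + ‖x‖) / 2 : ℝ) : ℂ) / (((1 + ‖x‖) / 2 : ℝ) : ℂ)) • x = x
    have hr : (0:ℝ) < (1 + ‖x‖) / 2 := by positivity
    rw [div_self (by exact_mod_cast hr.ne'), one_smul]
  last := by
    show ((((1 + ‖y‖) / 2 : ℝ) : ℂ) / (((1 + ‖y‖) / 2 : ℝ) : ℂ)) • y = y
    have hr : (0:ℝ) < (1 + ‖y‖) / 2 := by positivity
    rw [div_self (by exact_mod_cast hr.ne'), one_smul]
  link := by
    intro i
    fin_cases i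
    show ((0:ℂ) / _) • x = ((0:ℂ) / _) • y
    simp

lemma chains_nonempty {x y : X} (hx : ‖x‖ < 1) (hy : ‖y‖ < 1) :
    (Set.range fun c : AnalyticChain x y => c.length).Nonempty :=
  ⟨_, ⟨joinChain x y hx hy, rfl⟩⟩

/-- The reverse of an analytic chain. -/
noncomputable def AnalyticChain.reverse {x y : X} (c : AnalyticChain x y) : AnalyticChain y x where
  n := c.n
  f i := c.f i.rev
  z i := c.w i.rev
  w i := c.z i.rev
  holo i := c.holo i.rev
  maps i := c.maps i.rev
  z_mem i := c.w_mem i.rev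
  w_mem i := c.z_mem i.rev
  first := by
    show c.f (Fin.rev 0) (c.w (Fin.rev 0)) = y
    rw [Fin.rev_zero]; exact c.last
  last := by
    show c.f (Fin.last c.n).rev (c.z (Fin.last c.n).rev) = x
    rw [Fin.rev_last]; exact c.first
  link i := by
    show c.f i.castSucc.rev (c.z i.castSucc.rev) = c.f i.succ.rev (c.w i.succ.rev)
    rw [Fin.rev_castSucc, Fin.rev_succ]
    exact (c.link i.rev).symm

lemma reverse_length {x y : X} (c : AnalyticChain x y) : c.reverse.length = c.length := by
  unfold AnalyticChain.length AnalyticChain.reverse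
  exact Fintype.sum_bijective Fin.rev Fin.rev_bijective _ _
    (fun i => poincareDist_comm (c.w i.rev) (c.z i.rev))

lemma kobayashiDist_symm (x y : X) : kobayashiDist x y = kobayashiDist y x := by
  unfold kobayashiDist
  congr 1
  ext l
  constructor
  · rintro ⟨c, rfl⟩; exact ⟨c.reverse, reverse_length c⟩
  · rintro ⟨c, rfl⟩; exact ⟨c.reverse, reverse_length c⟩

/-- Concatenation of chains. -/
noncomputable def AnalyticChain.concat {x y z : X} (c₁ : AnalyticChain x y)
    (c₂ : AnalyticChain y z) : AnalyticChain x z where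
  n := c₁.n + c₂.n + 1
  f i := if h : i.val ≤ c₁.n then c₁.f ⟨i.val, by omega⟩ else c₂.f ⟨i.val - c₁.n - 1, by omega⟩
  z i := if h : i.val ≤ c₁.n then c₁.z ⟨i.val, by omega⟩ else c₂.z ⟨i.val - c₁.n - 1, by omega⟩
  w i := if h : i.val ≤ c₁.n then c₁.w ⟨i.val, by omega⟩ else c₂.w ⟨i.val - c₁.n - 1, by omega⟩
  holo i := by split <;> [exact c₁.holo _; exact c₂.holo _]
  maps i := by split <;> [exact c₁.maps _; exact c₂.maps _]
  z_mem i := by split <;> [exact c₁.z_mem _; exact c₂.z_mem _]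
  w_mem i := by split <;> [exact c₁.w_mem _; exact c₂.w_mem _]
  first := by
    have h : (0 : Fin (c₁.n + c₂.n + 1 + 1)).val ≤ c₁.n := by
      simp
    simp only [h, dif_pos]
    exact c₁.first
  last := by
    have h : ¬ (Fin.last (c₁.n + c₂.n + 1)).val ≤ c₁.n := by
      simp only [Fin.val_last]; omega
    simp only [h, dif_neg, not_false_iff]
    have e : (⟨(Fin.last (c₁.n + c₂.n + 1)).val - c₁.n - 1, by simp only [Fin.val_last]; omega⟩
        : Fin (c₂.n + 1)) = Fin.last c₂.n := by
      apply Fin.ext; simp only [Fin.val_last]; omega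
    rw [e]
    exact c₂.last
  link i := by
    rcases lt_trichotomy i.val c₁.n with hlt | heq | hgt
    · have h1 : (i.castSucc).val ≤ c₁.n := by simp only [Fin.coe_castSucc]; omega
      have h2 : (i.succ).val ≤ c₁.n := by simp only [Fin.val_succ]; omega
      simp only [h1, h2, dif_pos]
      have e1 : (⟨(i.castSucc).val, by omega⟩ : Fin (c₁.n + 1))
          = (⟨i.val, hlt⟩ : Fin c₁.n).castSucc := by
        apply Fin.ext; simp
      have e2 : (⟨(i.succ).val, by omega⟩ : Fin (c₁.n + 1))
          = (⟨i.val, hlt⟩ : Fin c₁.n).succ := by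
        apply Fin.ext; simp
      rw [e1, e2]
      exact c₁.link ⟨i.val, hlt⟩
    · have h1 : (i.castSucc).val ≤ c₁.n := by simp only [Fin.coe_castSucc]; omega
      have h2 : ¬ (i.succ).val ≤ c₁.n := by simp only [Fin.val_succ]; omega
      simp only [h1, h2, dif_pos, dif_neg, not_false_iff]
      have e1 : (⟨(i.castSucc).val, by omega⟩ : Fin (c₁.n + 1)) = Fin.last c₁.n := by
        apply Fin.ext; simp only [Fin.coe_castSucc, Fin.val_last]; omega
      have e2 : (⟨(i.succ).val - c₁.n - 1, by omega⟩ : Fin (c₂.n + 1)) = 0 := by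
        apply Fin.ext; simp only [Fin.val_succ, Fin.val_zero]; omega
      rw [e1, e2, c₁.last, c₂.first]
    · have h1 : ¬ (i.castSucc).val ≤ c₁.n := by simp only [Fin.coe_castSucc]; omega
      have h2 : ¬ (i.succ).val ≤ c₁.n := by simp only [Fin.val_succ]; omega
      simp only [h1, h2, dif_neg, not_false_iff]
      have hi : i.val - c₁.n - 1 < c₂.n := by have := i.isLt; omega
      have e1 : (⟨(i.castSucc).val - c₁.n - 1, by omega⟩ : Fin (c₂.n + 1))
          = (⟨i.val - c₁.n - 1, hi⟩ : Fin c₂.n).castSucc := by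
        apply Fin.ext; simp only [Fin.coe_castSucc]
      have e2 : (⟨(i.succ).val - c₁.n - 1, by omega⟩ : Fin (c₂.n + 1))
          = (⟨i.val - c₁.n - 1, hi⟩ : Fin c₂.n).succ := by
        apply Fin.ext; simp only [Fin.val_succ, Fin.coe_castSucc]; omega
      rw [e1, e2]
      exact c₂.link ⟨i.val - c₁.n - 1, hi⟩

lemma concat_length {x y z : X} (c₁ : AnalyticChain x y) (c₂ : AnalyticChain y z) :
    (c₁.concat c₂).length = c₁.length + c₂.length := by
  have hcast : c₁.n + c₂.n + 1 + 1 = (c₁.n + 1) + (c₂.n + 1) := by omega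
  show (∑ i : Fin (c₁.n + c₂.n + 1 + 1),
      poincareDist
        (if h : i.val ≤ c₁.n then c₁.z ⟨i.val, by omega⟩ else c₂.z ⟨i.val - c₁.n - 1, by omega⟩)
        (if h : i.val ≤ c₁.n then c₁.w ⟨i.val, by omega⟩ else c₂.w ⟨i.val - c₁.n - 1, by omega⟩))
      = _
  rw [show (∑ i : Fin (c₁.n + c₂.n + 1 + 1),
      poincareDist
        (if h : i.val ≤ c₁.n then c₁.z ⟨i.val, by omega⟩ else c₂.z ⟨i.val - c₁.n - 1, by omega⟩)
        (if h : i.val ≤ c₁.n then c₁.w ⟨i.val, by omega⟩ else c₂.w ⟨i.val - c₁.n - 1, by omega⟩))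
      = ∑ i : Fin ((c₁.n + 1) + (c₂.n + 1)),
      poincareDist
        (if h : i.val ≤ c₁.n then c₁.z ⟨i.val, by omega⟩ else c₂.z ⟨i.val - c₁.n - 1, by omega⟩)
        (if h : i.val ≤ c₁.n then c₁.w ⟨i.val, by omega⟩ else c₂.w ⟨i.val - c₁.n - 1, by omega⟩)
    from Fintype.sum_bijective (Fin.cast hcast) ((finCongr hcast).bijective) _ _ (fun i => rfl)]
  rw [Fin.sum_univ_add]
  congr 1
  · apply Finset.sum_congr rfl
    intro i _
    have h : (Fin.castAdd (c₂.n + 1) i).val ≤ c₁.n := by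
      simp only [Fin.coe_castAdd]; omega
    simp only [h, dif_pos]
    have e : (⟨(Fin.castAdd (c₂.n + 1) i).val, by omega⟩ : Fin (c₁.n + 1)) = i := by
      apply Fin.ext; simp
    rw [e]
  · apply Finset.sum_congr rfl
    intro i _
    have h : ¬ (Fin.natAdd (c₁.n + 1) i).val ≤ c₁.n := by
      simp only [Fin.coe_natAdd]; omega
    simp only [h, dif_neg, not_false_iff]
    have e : (⟨(Fin.natAdd (c₁.n + 1) i).val - c₁.n - 1, by omega⟩ : Fin (c₂.n + 1)) = i := by
      apply Fin.ext; simp only [Fin.coe_natAdd]; omega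
    rw [e]

lemma kobayashiDist_triangle {x y z : X} (hx : ‖x‖ < 1) (hy : ‖y‖ < 1) (hz : ‖z‖ < 1) :
    kobayashiDist x z ≤ kobayashiDist x y + kobayashiDist y z := by
  have hne1 := chains_nonempty (x := x) (y := y) hx hy
  have hne2 := chains_nonempty (x := y) (y := z) hy hz
  have key : ∀ a ∈ (Set.range fun c : AnalyticChain x y => c.length),
      ∀ b ∈ (Set.range fun c : AnalyticChain y z => c.length),
      kobayashiDist x z ≤ a + b := by
    rintro a ⟨c₁, rfl⟩ b ⟨c₂, rfl⟩
    exact csInf_le (lengths_bddBelow x z) ⟨c₁.concat c₂, concat_length c₁ c₂⟩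
  have step : ∀ a ∈ (Set.range fun c : AnalyticChain x y => c.length),
      kobayashiDist x z - kobayashiDist y z ≤ a := by
    intro a ha
    have : kobayashiDist x z - a ≤ kobayashiDist y z :=
      le_csInf hne2 fun b hb => by have := key a ha b hb; linarith
    linarith
  have := le_csInf hne1 step
  unfold kobayashiDist at this ⊢
  linarith

lemma telescope_sum {n : ℕ} (g h : Fin (n + 1) → X)
    (hlink : ∀ i : Fin n, h i.castSucc = g i.succ) :
    ∑ i, (g i - h i) = g 0 - h (Fin.last n) := by
  induction n with
  | zero => simp
  | succ n ih =>
    rw [Fin.sum_univ_castSucc]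
    have key := ih (fun i => g i.castSucc) (fun i => h i.castSucc)
      (fun i => by rw [hlink i.castSucc, Fin.succ_castSucc])
    rw [key]
    have h2 : h ((Fin.last n).castSucc) = g (Fin.last (n + 1)) := by
      rw [hlink (Fin.last n), Fin.succ_last]
    simp only [Fin.castSucc_zero, h2]
    abel

lemma norm_sub_le_four_mul_length {x y : X} (c : AnalyticChain x y) :
    ‖x - y‖ ≤ 4 * c.length := by
  have htel : ∑ i, (c.f i (c.z i) - c.f i (c.w i)) = x - y := by
    rw [telescope_sum (fun i => c.f i (c.z i)) (fun i => c.f i (c.w i)) c.link, c.first, c.last]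
  have hterm : ∀ i : Fin (c.n + 1),
      ‖c.f i (c.z i) - c.f i (c.w i)‖ ≤ 4 * poincareDist (c.z i) (c.w i) := by
    intro i
    by_cases hne : c.f i (c.z i) - c.f i (c.w i) = 0
    · rw [hne, norm_zero]
      have := chain_pd_nonneg c i
      linarith
    · obtain ⟨ℓ, hℓ1, hℓ2⟩ := exists_dual_vector ℂ _ (norm_ne_zero_iff.mpr hne)
      set g : ℂ → ℂ := fun ζ => ℓ (c.f i ζ) with hg
      have hdg : DifferentiableOn ℂ g (ball 0 1) :=
        ℓ.differentiable.comp_differentiableOn (c.holo i)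
      have hmg : MapsTo g (ball 0 1) (ball 0 1) := by
        intro ζ hζ
        rw [mem_ball_zero_iff]
        calc ‖ℓ (c.f i ζ)‖ ≤ ‖ℓ‖ * ‖c.f i ζ‖ := ℓ.le_opNorm _
          _ = ‖c.f i ζ‖ := by rw [hℓ1, one_mul]
          _ < 1 := mem_ball_zero_iff.1 (c.maps i ζ hζ)
      have hsp := schwarz_pick hdg hmg (c.z_mem i) (c.w_mem i)
      have hzi : ‖c.z i‖ < 1 := mem_ball_iff_abs.1 (c.z_mem i)
      have hwi : ‖c.w i‖ < 1 := mem_ball_iff_abs.1 (c.w_mem i)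
      have hgz : ‖g (c.z i)‖ < 1 := mem_ball_iff_abs.1 (hmg (c.z_mem i))
      have hgw : ‖g (c.w i)‖ < 1 := mem_ball_iff_abs.1 (hmg (c.w_mem i))
      have hval : ‖c.f i (c.z i) - c.f i (c.w i)‖ = ‖g (c.z i) - g (c.w i)‖ := by
        have : g (c.z i) - g (c.w i) = ℓ (c.f i (c.z i) - c.f i (c.w i)) := by
          rw [hg]; simp only; rw [map_sub]
        rw [this, hℓ2]
        simp
      have hden : ‖1 - (starRingEnd ℂ) (g (c.z i)) * g (c.w i)‖ ≤ 2 := by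
        calc ‖1 - (starRingEnd ℂ) (g (c.z i)) * g (c.w i)‖
            ≤ ‖1‖ + ‖(starRingEnd ℂ) (g (c.z i)) * g (c.w i)‖ :=
              norm_sub_le _ _
          _ ≤ 1 + 1 := by
              rw [norm_one, norm_mul, Complex.norm_conj]
              have h1 := norm_nonneg (g (c.z i))
              have h2 := norm_nonneg (g (c.w i))
              nlinarith
          _ = 2 := by norm_num
      have hdenne : (1 : ℂ) - (starRingEnd ℂ) (g (c.z i)) * g (c.w i) ≠ 0 :=
        mob_den_ne hgz hgw
      have habs : ‖g (c.z i) - g (c.w i)‖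
          = ‖mob (g (c.z i)) (g (c.w i))‖
            * ‖1 - (starRingEnd ℂ) (g (c.z i)) * g (c.w i)‖ := by
        rw [abs_mob_eq, div_mul_cancel₀ _ (norm_ne_zero_iff.mpr hdenne)]
      have hmobz := abs_mob_lt_one hzi hwi
      have hart := le_two_mul_artanh (norm_nonneg (mob (c.z i) (c.w i))) hmobz
      rw [hval, habs]
      have hpd : poincareDist (c.z i) (c.w i) = artanh (‖mob (c.z i) (c.w i)‖) :=
        poincareDist_eq _ _
      calc ‖mob (g (c.z i)) (g (c.w i))‖
            * ‖1 - (starRingEnd ℂ) (g (c.z i)) * g (c.w i)‖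
          ≤ ‖mob (c.z i) (c.w i)‖ * 2 :=
            mul_le_mul hsp hden (norm_nonneg _) (norm_nonneg _)
        _ ≤ (2 * artanh (‖mob (c.z i) (c.w i)‖)) * 2 := by nlinarith
        _ = 4 * poincareDist (c.z i) (c.w i) := by rw [hpd]; ring
  calc ‖x - y‖ = ‖∑ i, (c.f i (c.z i) - c.f i (c.w i))‖ := by rw [htel]
    _ ≤ ∑ i, ‖c.f i (c.z i) - c.f i (c.w i)‖ := norm_sum_le _ _
    _ ≤ ∑ i, 4 * poincareDist (c.z i) (c.w i) := Finset.sum_le_sum fun i _ => hterm i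
    _ = 4 * c.length := by rw [AnalyticChain.length, Finset.mul_sum]

lemma norm_le_kobayashiDist {x y : X} (hx : ‖x‖ < 1) (hy : ‖y‖ < 1) :
    ‖x - y‖ ≤ 4 * kobayashiDist x y := by
  have : ‖x - y‖ / 4 ≤ kobayashiDist x y := by
    apply le_csInf (chains_nonempty hx hy)
    rintro b ⟨c, rfl⟩
    have := norm_sub_le_four_mul_length c
    linarith
  linarith

lemma kobayashiDist_eq_zero_iff {x y : X} (hx : ‖x‖ < 1) (hy : ‖y‖ < 1) :
    kobayashiDist x y = 0 ↔ x = y := by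
  constructor
  · intro h
    have h4 := norm_le_kobayashiDist hx hy
    rw [h] at h4
    have : ‖x - y‖ = 0 := le_antisymm (by linarith) (norm_nonneg _)
    rwa [norm_sub_eq_zero_iff] at this
  · rintro rfl
    refine le_antisymm ?_ (kobayashiDist_nonneg x x)
    exact csInf_le (lengths_bddBelow x x) ⟨constChain x hx, constChain_length x hx⟩

end ChainAux

section ClosedDenseOperators

variable {H K : Type*} [NormedAddCommGroup H] [InnerProductSpace ℂ H] [CompleteSpace H]
  [NormedAddCommGroup K] [InnerProductSpace ℂ K] [CompleteSpace K]

/-- `C(H,K)`: the closed densely-defined linear operators from `H` to `K`. -/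
def ClosedDenseOp (H K : Type*) [NormedAddCommGroup H] [InnerProductSpace ℂ H]
    [NormedAddCommGroup K] [InnerProductSpace ℂ K] : Type _ :=
  {T : H →ₗ.[ℂ] K // Dense (T.domain : Set H) ∧ T.IsClosed}

/-- `IsHat T A` says that the bounded operator `A : K → H` is
`Ṫ = (I + T*T)^{-1/2} T*`:  there are bounded positive operators `B` and `R` on `H` such
that `B` is the (everywhere defined) inverse of `I + T*T`, `R` is the positive square root
of `B` (so `R = (I + T*T)^{-1/2}`), the adjoint `T*` is everywhere defined, `‖A‖ < 1`
and `A y = R (T* y)` for all `y`. -/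
def IsHat (T : H →ₗ.[ℂ] K) (A : K →L[ℂ] H) : Prop :=
  ∃ B R : H →L[ℂ] H, B.IsPositive ∧
    (∀ p : {p : T.domain // T p ∈ T.adjoint.domain},
      B ((p.1 : H) + T.adjoint ⟨T p.1, p.2⟩) = (p.1 : H)) ∧
    (∀ y : H, ∃ p : {p : T.domain // T p ∈ T.adjoint.domain},
      (p.1 : H) + T.adjoint ⟨T p.1, p.2⟩ = y) ∧
    R.IsPositive ∧ R * R = B ∧
    T.adjoint.domain = ⊤ ∧ ‖A‖ < 1 ∧
    ∀ y : K, ∀ hy : y ∈ T.adjoint.domain, A y = R (T.adjoint ⟨y, hy⟩)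

end ClosedDenseOperators

section OpAux

open scoped ComplexInnerProductSpace ComplexConjugate

variable {H K : Type*} [NormedAddCommGroup H] [InnerProductSpace ℂ H] [CompleteSpace H]
  [NormedAddCommGroup K] [InnerProductSpace ℂ K] [CompleteSpace K] [FiniteDimensional ℂ K]

set_option maxHeartbeats 1000000 in
/-- Structural consequences of `IsHat`: the positive square root `R` is determined by `A`
(via `R² = I - AA*`), the operator `T` has full domain, and its values are recovered from the
`Ṫ`-data. -/
lemma isHat_structure {T : H →ₗ.[ℂ] K} (hTd : Dense (T.domain : Set H)) {A : K →L[ℂ] H}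
    (h : IsHat T A) :
    ∃ (R : H →L[ℂ] H) (t : K →L[ℂ] H),
      R.IsPositive ∧
      R * R = 1 - A ∘L (ContinuousLinearMap.adjoint A) ∧
      Function.Injective R ∧
      (∀ y, A y = R (t y)) ∧
      T.domain = ⊤ ∧
      (∀ x : T.domain, T x = (ContinuousLinearMap.adjoint t) x) := by
  obtain ⟨B, R, hBpos, hBinv, hBsurj, hRpos, hRR, hdom, hAnorm, hA⟩ := h
  have hmem : ∀ y : K, y ∈ T.adjoint.domain := fun y => by
    rw [hdom]; exact Submodule.mem_top
  set tlin : K →ₗ[ℂ] H :=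
    { toFun := fun y => T.adjoint ⟨y, hmem y⟩
      map_add' := fun y₁ y₂ => by
        show T.adjoint ⟨y₁ + y₂, hmem _⟩ = T.adjoint ⟨y₁, hmem _⟩ + T.adjoint ⟨y₂, hmem _⟩
        rw [show (⟨y₁ + y₂, hmem _⟩ : T.adjoint.domain) = ⟨y₁, hmem _⟩ + ⟨y₂, hmem _⟩ from rfl,
          T.adjoint.map_add]
      map_smul' := fun m y => by
        show T.adjoint ⟨m • y, hmem _⟩ = m • T.adjoint ⟨y, hmem _⟩
        rw [show (⟨m • y, hmem _⟩ : T.adjoint.domain) = m • (⟨y, hmem _⟩ : T.adjoint.domain)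
          from rfl, T.adjoint.map_smul] } with htlin
  set t : K →L[ℂ] H := LinearMap.toContinuousLinearMap tlin with htdef
  have ht : ∀ y, t y = T.adjoint ⟨y, hmem y⟩ := fun y => rfl
  have hfa := LinearPMap.adjoint_isFormalAdjoint hTd
  have htadj : ∀ x : T.domain, (ContinuousLinearMap.adjoint t) (x : H) = T x := by
    intro x
    apply ext_inner_right ℂ
    intro k
    rw [ContinuousLinearMap.adjoint_inner_left, ht]
    have hf := hfa ⟨k, hmem k⟩ x
    rw [← inner_conj_symm, hf, inner_conj_symm]
  set C : H →L[ℂ] H := 1 + t ∘L (ContinuousLinearMap.adjoint t) with hCdef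
  have hCapp : ∀ u : H, C u = u + t ((ContinuousLinearMap.adjoint t) u) := fun u => rfl
  have hBinv' : ∀ x : T.domain, B ((x : H) + t (T x)) = x := fun x => hBinv ⟨x, hmem _⟩
  have hBdom : ∀ y, ∃ x : T.domain, (x : H) + t (T x) = y := by
    intro y
    obtain ⟨p, hp⟩ := hBsurj y
    exact ⟨p.1, hp⟩
  have hCB : ∀ y, C (B y) = y := by
    intro y
    obtain ⟨x, hx⟩ := hBdom y
    have hB : B y = (x : H) := by rw [← hx]; exact hBinv' x
    rw [hB, hCapp, htadj x, hx]
  have hCinj : Function.Injective C := by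
    intro u v huv
    have h0 : C (u - v) = 0 := by rw [map_sub, huv, sub_self]
    have hinner : ⟪C (u - v), u - v⟫ = 0 := by rw [h0, inner_zero_left]
    have hexp : ⟪C (u - v), u - v⟫
        = ((‖u - v‖ ^ 2 + ‖(ContinuousLinearMap.adjoint t) (u - v)‖ ^ 2 : ℝ) : ℂ) := by
      rw [hCapp, inner_add_left]
      rw [show ⟪t ((ContinuousLinearMap.adjoint t) (u - v)), u - v⟫
          = ⟪(ContinuousLinearMap.adjoint t) (u - v), (ContinuousLinearMap.adjoint t) (u - v)⟫
        from (ContinuousLinearMap.adjoint_inner_right t _ _).symm]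
      rw [inner_self_eq_norm_sq_to_K, inner_self_eq_norm_sq_to_K]
      norm_cast
    rw [hexp] at hinner
    have hreal : (‖u - v‖ ^ 2 + ‖(ContinuousLinearMap.adjoint t) (u - v)‖ ^ 2 : ℝ) = 0 := by
      exact_mod_cast hinner
    have hnv : ‖u - v‖ = 0 := by
      nlinarith [norm_nonneg (u - v), norm_nonneg ((ContinuousLinearMap.adjoint t) (u - v)),
        sq_nonneg ‖(ContinuousLinearMap.adjoint t) (u - v)‖]
    exact sub_eq_zero.1 (norm_eq_zero.1 hnv)
  have hBC : ∀ z, B (C z) = z := fun z => hCinj (by rw [hCB (C z)])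
  have hCBone : C * B = 1 := by
    ext y
    simp only [ContinuousLinearMap.mul_apply, ContinuousLinearMap.one_apply]
    exact hCB y
  have hBCone : B * C = 1 := by
    ext z
    simp only [ContinuousLinearMap.mul_apply, ContinuousLinearMap.one_apply]
    exact hBC z
  have hRB : R * B = B * R := by rw [← hRR]; exact (mul_assoc R R R).symm
  have hCR : C * R = R * C := by
    calc C * R = (C * R) * (B * C) := by rw [hBCone, mul_one]
      _ = ((C * R) * B) * C := by rw [mul_assoc (C * R) B C]
      _ = (C * (R * B)) * C := by rw [mul_assoc C R B]
      _ = (C * (B * R)) * C := by rw [hRB]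
      _ = ((C * B) * R) * C := by rw [mul_assoc C B R]
      _ = R * C := by rw [hCBone, one_mul]
  have hRCR : R * C * R = 1 := by
    calc R * C * R = (C * R) * R := by rw [hCR.symm]
      _ = C * (R * R) := by rw [mul_assoc]
      _ = C * B := by rw [hRR]
      _ = 1 := hCBone
  have hRsa : ContinuousLinearMap.adjoint R = R := by
    have h1 := hRpos.isSelfAdjoint
    rw [← ContinuousLinearMap.star_eq_adjoint]
    exact h1
  have hAcomp : A = R ∘L t := by
    ext y
    exact hA y (hmem y)
  have htt' : t ∘L (ContinuousLinearMap.adjoint t) = C - 1 := by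
    rw [hCdef, add_sub_cancel_left]
  have hAA : A ∘L (ContinuousLinearMap.adjoint A) = 1 - R * R := by
    rw [hAcomp, ContinuousLinearMap.adjoint_comp, hRsa]
    have e : (R ∘L t) ∘L ((ContinuousLinearMap.adjoint t) ∘L R)
        = R * (t ∘L ContinuousLinearMap.adjoint t) * R := rfl
    rw [e, htt', mul_sub, mul_one, sub_mul, hRCR, hRR]
  have hRRA : R * R = 1 - A ∘L (ContinuousLinearMap.adjoint A) := by rw [hAA]; abel
  have hRinj : Function.Injective R := by
    intro u v huv
    have hBu : B u = B v := by
      rw [← hRR]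
      show R (R u) = R (R v)
      rw [huv]
    calc u = C (B u) := (hCB u).symm
      _ = C (B v) := by rw [hBu]
      _ = v := hCB v
  have hdomTop : T.domain = ⊤ := by
    rw [eq_top_iff]
    intro x _
    have hx : x = B (C x) := (hBC x).symm
    obtain ⟨p, hp⟩ := hBdom (C x)
    have hBp : B (C x) = (p : H) := by rw [← hp]; exact hBinv' p
    rw [hx, hBp]
    exact p.2
  exact ⟨R, t, hRpos, hRRA, hRinj, fun y => hA y (hmem y), hdomTop,
    fun x => (htadj x).symm⟩

set_option synthInstance.maxHeartbeats 1000000 in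
/-- The map `T ↦ Ṫ` is injective. -/
lemma hat_inj {T S : ClosedDenseOp H K} {A : K →L[ℂ] H}
    (hT : IsHat T.1 A) (hS : IsHat S.1 A) : T = S := by
  obtain ⟨R₁, t₁, hR₁pos, hR₁sq, hR₁inj, hA₁, hdom₁, hval₁⟩ := isHat_structure T.2.1 hT
  obtain ⟨R₂, t₂, hR₂pos, hR₂sq, hR₂inj, hA₂, hdom₂, hval₂⟩ := isHat_structure S.2.1 hS
  have hReq : R₁ = R₂ := by
    have h1 := (ContinuousLinearMap.nonneg_iff_isPositive R₁).2 hR₁pos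
    have h2 := (ContinuousLinearMap.nonneg_iff_isPositive R₂).2 hR₂pos
    have hsq : R₂ * R₂ = R₁ * R₁ := by rw [hR₁sq, hR₂sq]
    calc R₁ = CFC.sqrt (R₁ * R₁) := (CFC.sqrt_unique rfl h1).symm
      _ = R₂ := CFC.sqrt_unique hsq h2
  have hteq : t₁ = t₂ := by
    ext y
    apply hR₁inj
    rw [← hA₁ y, hReq, ← hA₂ y]
  have hmain : T.1 = S.1 := by
    apply LinearPMap.ext (hdom₁.trans hdom₂.symm)
    intro x hx hy
    rw [hval₁ ⟨x, hx⟩, hval₂ ⟨x, hy⟩, hteq]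
  exact Subtype.ext hmain

end OpAux

/-- Let `K` be finite dimensional and, for `T ∈ C(H,K)`, let
`hat T = Ṫ = (I + T*T)^{-1/2} T*` be its image in the open unit ball of `L(K,H)`.
Then `d(T,S) := K_B(Ṫ, Ṡ)` (the Kobayashi distance of the hats) defines a metric on
`C(H,K)`: it is nonnegative, vanishes exactly on the diagonal, is symmetric, and
satisfies the triangle inequality. -/
theorem hatKobayashi_is_metric
    {H K : Type*} [NormedAddCommGroup H] [InnerProductSpace ℂ H] [CompleteSpace H]
    [NormedAddCommGroup K] [InnerProductSpace ℂ K] [CompleteSpace K]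
    [FiniteDimensional ℂ K]
    (hat : ClosedDenseOp H K → (K →L[ℂ] H))
    (hhat : ∀ T : ClosedDenseOp H K, IsHat T.1 (hat T)) :
    (∀ T S : ClosedDenseOp H K, 0 ≤ kobayashiDist (hat T) (hat S)) ∧
    (∀ T S : ClosedDenseOp H K, kobayashiDist (hat T) (hat S) = 0 ↔ T = S) ∧
    (∀ T S : ClosedDenseOp H K, kobayashiDist (hat T) (hat S) = kobayashiDist (hat S) (hat T)) ∧
    (∀ T S U : ClosedDenseOp H K,
      kobayashiDist (hat T) (hat U) ≤
        kobayashiDist (hat T) (hat S) + kobayashiDist (hat S) (hat U)) := by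
  have hball : ∀ T : ClosedDenseOp H K, ‖hat T‖ < 1 := by
    intro T
    obtain ⟨B, R, _, _, _, _, _, _, hAnorm, _⟩ := hhat T
    exact hAnorm
  refine ⟨fun T S => kobayashiDist_nonneg _ _, fun T S => ?_,
    fun T S => kobayashiDist_symm _ _,
    fun T S U => kobayashiDist_triangle (hball T) (hball S) (hball U)⟩
  constructor
  · intro h
    have heq : hat T = hat S := (kobayashiDist_eq_zero_iff (hball T) (hball S)).1 h
    have hS' : IsHat S.1 (hat T) := heq ▸ hhat S
    exact hat_inj (hhat T) hS'
  · rintro rfl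
    exact (kobayashiDist_eq_zero_iff (hball T) (hball T)).2 rfl
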